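/- Let M be a model category, λ an ordinal, and (f_μ : A_μ → B_μ)_{μ<λ} a λ-sequence of morphisms (i.e., a colimit-preserving functor λ → M^{[1]} into the arrow category). Suppose for each μ < λ either A_μ → A_{μ+1} is an isomorphism or the square with vertical maps f_μ, f_{μ+1} and horizontal maps A_μ → A_{μ+1}, B_μ → B_{μ+1} is a pushout, and that every B_μ → B_{μ+1} is a cofibration. If f₀ : A₀ → B₀ is a cofibration, then the induced map f_λ : colim A_μ → colim B_μ is a cofibration. -/

import Mathlib

open CategoryTheory CategoryTheory.Limits

/-- The restriction of a diagram `F : J ⥤ M` to the elements strictly below `j`. -/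
def restrictDiagram {M : Type u} [Category.{v} M] {J : Type w} [Preorder J]
    (F : J ⥤ M) (j : J) : {i : J // i < j} ⥤ M :=
  (show Monotone (Subtype.val : {i : J // i < j} → J) from fun _ _ h => h).functor ⋙ F

/-- The cocone on the restriction of `F` below `j` with apex `F.obj j`.  Saying that it
is a colimit cocone for every limit element `j` expresses that `F` is a `λ`-sequence
(a colimit-preserving functor). -/
def restrictCocone {M : Type u} [Category.{v} M] {J : Type w} [Preorder J]
    (F : J ⥤ M) (j : J) : Cocone (restrictDiagram F j) where
  pt := F.obj j
  ι :=
    { app := fun i => F.map (homOfLE i.2.le)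
      naturality := fun a b g => by
        dsimp [restrictDiagram]
        rw [Category.comp_id]
        exact (F.map_comp _ _).symm }

namespace TransfiniteMixedAux

variable {M : Type u} [Category.{v} M] {J : Type w}

/-- A partial lift defined on a lower set of indices. -/
structure PartialLift [Preorder J] (F G : J ⥤ M) (f : F ⟶ G) {X Y : M} (p : X ⟶ Y)
    (a : ∀ j : J, F.obj j ⟶ X) (b : ∀ j : J, G.obj j ⟶ Y) where
  s : Set J
  lower : IsLowerSet s
  ℓ : ∀ i ∈ s, G.obj i ⟶ X
  h1 : ∀ i (hi : i ∈ s), f.app i ≫ ℓ i hi = a i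
  h2 : ∀ i (hi : i ∈ s), ℓ i hi ≫ p = b i
  compat : ∀ i k (hik : i ≤ k) (hk : k ∈ s),
    G.map (homOfLE hik) ≫ ℓ k hk = ℓ i (lower hik hk)

variable [Preorder J] {F G : J ⥤ M} {f : F ⟶ G} {X Y : M} {p : X ⟶ Y}
  {a : ∀ j : J, F.obj j ⟶ X} {b : ∀ j : J, G.obj j ⟶ Y}

lemma PartialLift.ℓ_proof_irrel (q : PartialLift F G f p a b) (i : J)
    (h h' : i ∈ q.s) : q.ℓ i h = q.ℓ i h' := rfl

instance : Preorder (PartialLift F G f p a b) where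
  le q r := ∃ hs : q.s ⊆ r.s, ∀ i (hi : i ∈ q.s), r.ℓ i (hs hi) = q.ℓ i hi
  le_refl q := ⟨subset_rfl, fun _ _ => rfl⟩
  le_trans q r t := by
    rintro ⟨h1, h2⟩ ⟨h3, h4⟩
    exact ⟨h1.trans h3, fun i hi => (h4 i (h1 hi)).trans (h2 i hi)⟩

end TransfiniteMixedAux

open TransfiniteMixedAux in
/-- Key extension step. -/
theorem TransfiniteMixedAux.PartialLift.extend {M : Type u} [Category.{v} M]
    {J : Type w} [LinearOrder J] [OrderBot J] [SuccOrder J]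
    {F G : J ⥤ M} {f : F ⟶ G} {X Y : M} {p : X ⟶ Y}
    {a : ∀ j : J, F.obj j ⟶ X} {b : ∀ j : J, G.obj j ⟶ Y}
    (ha : ∀ i j (h : i ≤ j), F.map (homOfLE h) ≫ a j = a i)
    (hb : ∀ i j (h : i ≤ j), G.map (homOfLE h) ≫ b j = b i)
    (hab : ∀ j, a j ≫ p = f.app j ≫ b j)
    (hsmoothF : ∀ j : J, Order.IsSuccLimit j → Nonempty (IsColimit (restrictCocone F j)))
    (hsmoothG : ∀ j : J, Order.IsSuccLimit j → Nonempty (IsColimit (restrictCocone G j)))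
    (hstep : ∀ j : J, ¬ IsMax j →
      IsIso (F.map (homOfLE (Order.le_succ j))) ∨
      IsPushout (F.map (homOfLE (Order.le_succ j))) (f.app j) (f.app (Order.succ j))
        (G.map (homOfLE (Order.le_succ j))))
    (hlift0 : HasLiftingProperty (f.app (⊥ : J)) p)
    (hliftstep : ∀ j : J, ¬ IsMax j →
      HasLiftingProperty (G.map (homOfLE (Order.le_succ j))) p)
    (q : PartialLift F G f p a b) (j : J) (hs : q.s = Set.Iio j) :
    ∃ ℓj : G.obj j ⟶ X, f.app j ≫ ℓj = a j ∧ ℓj ≫ p = b j ∧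
      ∀ i (hi : i < j), G.map (homOfLE hi.le) ≫ ℓj = q.ℓ i (by rw [hs]; exact hi) := by
  rcases em (Order.IsSuccLimit j) with hj | hj
  · -- limit case
    obtain ⟨hG⟩ := hsmoothG j hj
    obtain ⟨hF⟩ := hsmoothF j hj
    have hmem : ∀ i : {i : J // i < j}, (i : J) ∈ q.s := fun i => by
      rw [hs]; exact i.2
    let c : Cocone (restrictDiagram G j) :=
      { pt := X
        ι :=
          { app := fun i => q.ℓ i (hmem i)
            naturality := fun i k g => by
              dsimp [restrictDiagram]
              rw [Category.comp_id]
              exact q.compat i.1 k.1 (leOfHom g) (hmem k) }}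
    refine ⟨hG.desc c, ?_, ?_, ?_⟩
    · refine hF.hom_ext fun i => ?_
      have h1 : (restrictCocone F j).ι.app i ≫ f.app j ≫ hG.desc c =
          f.app i ≫ (restrictCocone G j).ι.app i ≫ hG.desc c := by
        dsimp [restrictCocone, restrictDiagram]
        rw [← Category.assoc, f.naturality, Category.assoc]
      refine h1.trans ?_
      erw [hG.fac c i]
      dsimp [restrictCocone, restrictDiagram]
      rw [ha i.1 j i.2.le, q.h1]
    · refine hG.hom_ext fun i => ?_
      refine (Category.assoc _ _ _).symm.trans ?_
      erw [hG.fac c i]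
      dsimp [restrictCocone, restrictDiagram]
      rw [q.h2, hb i.1 j i.2.le]
    · intro i hi
      exact hG.fac c ⟨i, hi⟩
  · rw [Order.not_isSuccLimit_iff] at hj
    rcases hj with hj | hj
    · -- bottom case
      have hjb : j = ⊥ := hj.eq_bot
      subst hjb
      have sq : CommSq (a ⊥) (f.app (⊥ : J)) p (b ⊥) := ⟨hab ⊥⟩
      exact ⟨sq.lift, sq.fac_left, sq.fac_right,
        fun i hi => absurd hi (by simp)⟩
    · rw [Order.not_isSuccPrelimit_iff_succ_eq] at hj
      obtain ⟨k, hk, rfl⟩ := hj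
      have hkmem : k ∈ q.s := by rw [hs]; exact Order.lt_succ_of_not_isMax hk
      have hle : ∀ i (hik : i ≤ k), (homOfLE (hik.trans (Order.le_succ k)) :
          i ⟶ Order.succ k) = homOfLE hik ≫ homOfLE (Order.le_succ k) :=
        fun i hik => Subsingleton.elim _ _
      rcases hstep k hk with hiso | hpo
      · -- iso case
        haveI := hliftstep k hk
        have sq : CommSq (q.ℓ k hkmem) (G.map (homOfLE (Order.le_succ k))) p
            (b (Order.succ k)) := ⟨by rw [q.h2, hb k _ (Order.le_succ k)]⟩
        refine ⟨sq.lift, ?_, sq.fac_right, ?_⟩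
        · haveI := hiso
          rw [← cancel_epi (F.map (homOfLE (Order.le_succ k))), ← Category.assoc,
            f.naturality, Category.assoc, sq.fac_left, q.h1, ha k _ (Order.le_succ k)]
        · intro i hi
          have hik : i ≤ k := (Order.lt_succ_iff_of_not_isMax hk).mp hi
          have : q.ℓ i (q.lower hik hkmem) = q.ℓ i _ := rfl
          rw [show (homOfLE hi.le : i ⟶ Order.succ k) =
              homOfLE hik ≫ homOfLE (Order.le_succ k) from Subsingleton.elim _ _,
            G.map_comp, Category.assoc, sq.fac_left, q.compat i k hik hkmem]
      · -- pushout case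
        have w : F.map (homOfLE (Order.le_succ k)) ≫ a (Order.succ k) =
            f.app k ≫ q.ℓ k hkmem := by rw [ha k _ (Order.le_succ k), q.h1]
        refine ⟨hpo.desc (a (Order.succ k)) (q.ℓ k hkmem) w,
          hpo.inl_desc _ _ _, ?_, ?_⟩
        · apply hpo.hom_ext
          · rw [← Category.assoc, hpo.inl_desc, hab]
          · rw [← Category.assoc, hpo.inr_desc, q.h2, hb k _ (Order.le_succ k)]
        · intro i hi
          have hik : i ≤ k := (Order.lt_succ_iff_of_not_isMax hk).mp hi
          rw [show (homOfLE hi.le : i ⟶ Order.succ k) =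
              homOfLE hik ≫ homOfLE (Order.le_succ k) from Subsingleton.elim _ _,
            G.map_comp, Category.assoc, hpo.inr_desc, q.compat i k hik hkmem]

open TransfiniteMixedAux in
/-- Extending a partial lift on `Iio j` by a value at `j`. -/
theorem TransfiniteMixedAux.PartialLift.snoc {M : Type u} [Category.{v} M]
    {J : Type w} [LinearOrder J]
    {F G : J ⥤ M} {f : F ⟶ G} {X Y : M} {p : X ⟶ Y}
    {a : ∀ j : J, F.obj j ⟶ X} {b : ∀ j : J, G.obj j ⟶ Y}
    (q : PartialLift F G f p a b) (j : J) (hs : q.s = Set.Iio j)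
    (ℓj : G.obj j ⟶ X)
    (e1 : f.app j ≫ ℓj = a j) (e2 : ℓj ≫ p = b j)
    (e3 : ∀ i (hi : i < j), G.map (homOfLE hi.le) ≫ ℓj =
      q.ℓ i (by rw [hs]; exact hi)) :
    ∃ r : PartialLift F G f p a b, q ≤ r ∧ j ∈ r.s := by
  classical
  refine ⟨⟨insert j q.s, ?_,
    fun i hi => if h : i ∈ q.s then q.ℓ i h
      else eqToHom (congrArg G.obj ((Set.mem_insert_iff.mp hi).resolve_right h)) ≫ ℓj,
    ?_, ?_, ?_⟩, ⟨Set.subset_insert _ _, fun i hi => dif_pos hi⟩, Set.mem_insert _ _⟩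
  · -- lower set
    intro x y hyx hx
    rcases Set.mem_insert_iff.mp hx with rfl | hx
    · rcases eq_or_lt_of_le hyx with rfl | hlt
      · exact Set.mem_insert _ _
      · exact Set.mem_insert_of_mem _ (by rw [hs]; exact hlt)
    · exact Set.mem_insert_of_mem _ (q.lower hyx hx)
  · -- h1
    intro i hi
    by_cases h : i ∈ q.s
    · rw [dif_pos h]; exact q.h1 i h
    · obtain rfl := (Set.mem_insert_iff.mp hi).resolve_right h
      rw [dif_neg h]
      simpa using e1
  · -- h2
    intro i hi
    by_cases h : i ∈ q.s
    · rw [dif_pos h]; exact q.h2 i h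
    · obtain rfl := (Set.mem_insert_iff.mp hi).resolve_right h
      rw [dif_neg h]
      simpa using e2
  · -- compat
    intro i k hik hk
    by_cases hkm : k ∈ q.s
    · rw [dif_pos hkm, dif_pos (q.lower hik hkm)]
      exact q.compat i k hik hkm
    · obtain rfl := (Set.mem_insert_iff.mp hk).resolve_right hkm
      rw [dif_neg hkm]
      by_cases him : i ∈ q.s
      · rw [dif_pos him]
        have hilt : i < k := by rw [hs] at him; exact him
        have := e3 i hilt
        simpa using this
      · have hij : i = k := le_antisymm hik (by
          by_contra hlt
          exact him (by rw [hs]; exact lt_of_not_ge hlt))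
        subst hij
        rw [dif_neg him]
        have : (homOfLE hik : i ⟶ i) = 𝟙 i := Subsingleton.elim _ _
        simp [this]

open TransfiniteMixedAux in
theorem TransfiniteMixedAux.exists_global_lift {M : Type u} [Category.{v} M]
    {J : Type w} [LinearOrder J] [OrderBot J] [SuccOrder J] [WellFoundedLT J]
    {F G : J ⥤ M} {f : F ⟶ G} {X Y : M} {p : X ⟶ Y}
    {a : ∀ j : J, F.obj j ⟶ X} {b : ∀ j : J, G.obj j ⟶ Y}
    (ha : ∀ i j (h : i ≤ j), F.map (homOfLE h) ≫ a j = a i)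
    (hb : ∀ i j (h : i ≤ j), G.map (homOfLE h) ≫ b j = b i)
    (hab : ∀ j, a j ≫ p = f.app j ≫ b j)
    (hsmoothF : ∀ j : J, Order.IsSuccLimit j → Nonempty (IsColimit (restrictCocone F j)))
    (hsmoothG : ∀ j : J, Order.IsSuccLimit j → Nonempty (IsColimit (restrictCocone G j)))
    (hstep : ∀ j : J, ¬ IsMax j →
      IsIso (F.map (homOfLE (Order.le_succ j))) ∨
      IsPushout (F.map (homOfLE (Order.le_succ j))) (f.app j) (f.app (Order.succ j))
        (G.map (homOfLE (Order.le_succ j))))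
    (hlift0 : HasLiftingProperty (f.app (⊥ : J)) p)
    (hliftstep : ∀ j : J, ¬ IsMax j →
      HasLiftingProperty (G.map (homOfLE (Order.le_succ j))) p) :
    ∃ ℓ : ∀ j : J, G.obj j ⟶ X,
      (∀ j, f.app j ≫ ℓ j = a j) ∧ (∀ j, ℓ j ≫ p = b j) ∧
      (∀ i j (h : i ≤ j), G.map (homOfLE h) ≫ ℓ j = ℓ i) := by
  classical
  have hbdd : ∀ c : Set (PartialLift F G f p a b), IsChain (· ≤ ·) c → BddAbove c := by
    intro c hc
    have agree : ∀ q ∈ c, ∀ r ∈ c, ∀ i (hqi : i ∈ PartialLift.s q)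
        (hri : i ∈ PartialLift.s r), q.ℓ i hqi = r.ℓ i hri := by
      intro q hq r hr i hqi hri
      rcases eq_or_ne q r with rfl | hne
      · rfl
      rcases hc hq hr hne with h | h
      · exact (h.2 i hqi).symm
      · exact h.2 i hri
    rcases Set.eq_empty_or_nonempty c with rfl | hcne
    · exact ⟨⟨∅, fun _ _ h hx => hx, fun i hi => absurd hi (Set.notMem_empty i),
        fun i hi => absurd hi (Set.notMem_empty i),
        fun i hi => absurd hi (Set.notMem_empty i),
        fun i k _ hk => absurd hk (Set.notMem_empty k)⟩,
        fun q hq => absurd hq (Set.notMem_empty q)⟩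
    have hlow : IsLowerSet (⋃ q ∈ c, PartialLift.s q) := by
      intro x y hyx hx
      rw [Set.mem_iUnion₂] at hx ⊢
      obtain ⟨q, hq, hxq⟩ := hx
      exact ⟨q, hq, q.lower hyx hxq⟩
    have pick_spec : ∀ i (hi : i ∈ ⋃ q ∈ c, PartialLift.s q),
        (Set.mem_iUnion₂.mp hi).choose ∈ c ∧
          i ∈ PartialLift.s (Set.mem_iUnion₂.mp hi).choose := by
      intro i hi
      obtain ⟨h1, h2⟩ := (Set.mem_iUnion₂.mp hi).choose_spec
      exact ⟨h1, h2⟩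
    refine ⟨⟨⋃ q ∈ c, PartialLift.s q, hlow,
      fun i hi => (Set.mem_iUnion₂.mp hi).choose.ℓ i (pick_spec i hi).2,
      fun i hi => (Set.mem_iUnion₂.mp hi).choose.h1 i _,
      fun i hi => (Set.mem_iUnion₂.mp hi).choose.h2 i _,
      fun i k hik hk => ?_⟩,
      fun q hq => ⟨fun i hi => Set.mem_iUnion₂.mpr ⟨q, hq, hi⟩, fun i hi => ?_⟩⟩
    · refine ((Set.mem_iUnion₂.mp hk).choose.compat i k hik _).trans ?_
      exact agree _ (pick_spec k hk).1 _ (pick_spec i (hlow hik hk)).1 i _ _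
    · exact agree _ (pick_spec i (Set.mem_iUnion₂.mpr ⟨q, hq, hi⟩)).1 q hq i _ hi
  obtain ⟨m, hm⟩ := zorn_le (α := PartialLift F G f p a b) hbdd
  · -- maximal partial lift is total
    have hsu : m.s = Set.univ := by
      by_contra hne
      obtain ⟨j, hj, hmin⟩ := wellFounded_lt.has_min m.sᶜ (Set.nonempty_compl.mpr hne)
      have hIio : m.s = Set.Iio j := by
        ext i
        constructor
        · intro hi
          by_contra hij
          exact hj (m.lower (not_lt.mp hij) hi)
        · intro hi
          by_contra hcon
          exact hmin i hcon hi
      obtain ⟨ℓj, hℓ1, hℓ2, hℓ3⟩ := m.extend ha hb hab hsmoothF hsmoothG hstep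
        hlift0 hliftstep j hIio
      obtain ⟨r, hmr, hjr⟩ := m.snoc j hIio ℓj hℓ1 hℓ2 hℓ3
      exact hj ((hm hmr).1 hjr)
    refine ⟨fun j => m.ℓ j (by rw [hsu]; trivial), fun j => m.h1 j _,
      fun j => m.h2 j _, fun i j h => m.compat i j h _⟩

/-- Mixed transfinite compositions of pushouts and cofibrations.  In a model category
(where the cofibrations `cof` are exactly the maps with the left lifting property with
respect to the trivial fibrations `tfib`), given a `λ`-sequence of morphisms
`f_μ : A_μ → B_μ` such that at each step either `A_μ → A_{μ+1}` is an isomorphism or the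
square is a pushout, and each `B_μ → B_{μ+1}` is a cofibration, if `f₀` is a cofibration
then the induced map on colimits is a cofibration. -/
theorem transfinite_mixed_cofibration {M : Type u} [Category.{v} M]
    (cof tfib : MorphismProperty M)
    (hcof : ∀ {A B : M} (f : A ⟶ B),
      cof f ↔ ∀ {X Y : M} (p : X ⟶ Y), tfib p → HasLiftingProperty f p)
    {J : Type w} [LinearOrder J] [OrderBot J] [SuccOrder J] [WellFoundedLT J]
    (F G : J ⥤ M) (f : F ⟶ G) [HasColimit F] [HasColimit G]
    (hsmoothF : ∀ j : J, Order.IsSuccLimit j → Nonempty (IsColimit (restrictCocone F j)))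
    (hsmoothG : ∀ j : J, Order.IsSuccLimit j → Nonempty (IsColimit (restrictCocone G j)))
    (hstep : ∀ j : J, ¬ IsMax j →
      IsIso (F.map (homOfLE (Order.le_succ j))) ∨
      IsPushout (F.map (homOfLE (Order.le_succ j))) (f.app j) (f.app (Order.succ j))
        (G.map (homOfLE (Order.le_succ j))))
    (hcofstep : ∀ j : J, ¬ IsMax j → cof (G.map (homOfLE (Order.le_succ j))))
    (h0 : cof (f.app ⊥)) :
    cof (colimMap f) := by
  rw [hcof]
  intro X Y p hp
  constructor
  intro u v sq
  obtain ⟨ℓ, hl1, hl2, hl3⟩ := TransfiniteMixedAux.exists_global_lift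
    (F := F) (G := G) (f := f) (p := p)
    (a := fun j => colimit.ι F j ≫ u) (b := fun j => colimit.ι G j ≫ v)
    (fun i j h => by rw [← Category.assoc, colimit.w])
    (fun i j h => by rw [← Category.assoc, colimit.w])
    (fun j => by rw [Category.assoc, sq.w, ← Category.assoc, ι_colimMap, Category.assoc])
    hsmoothF hsmoothG hstep
    ((hcof (f.app ⊥)).mp h0 p hp)
    (fun j hj => (hcof _).mp (hcofstep j hj) p hp)
  refine CommSq.HasLift.mk' ⟨colimit.desc G
    ⟨X, { app := ℓ, naturality := fun i j g => ?_ }⟩, ?_, ?_⟩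
  · dsimp
    rw [Category.comp_id, show g = homOfLE (leOfHom g) from Subsingleton.elim _ _]
    exact hl3 i j (leOfHom g)
  · exact colimit.hom_ext fun j => by
      rw [← Category.assoc, ι_colimMap, Category.assoc, colimit.ι_desc]
      exact hl1 j
  · exact colimit.hom_ext fun j => by
      rw [← Category.assoc, colimit.ι_desc]
      exact hl2 j
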